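/- Let v₀ = (1,1,…,1) ∈ ℤ^n and let V ⊆ ℤ^n be a submodule with property 𝔓. If φ : V → ℤ is a group homomorphism that is non-negative on V ∩ ℕ^n, then φ extends to a homomorphism Φ : ℤ^n → ℤ that is non-negative on ℕ^n; equivalently, there exist non-negative integers c_1,…,c_n with φ(x) = ∑_i c_i x_i for all x ∈ V. -/

import Mathlib

/-- A *unit* of `ι → ℤ`: all coordinates lie in `{-1, 0, 1}`. -/
def IsUnitVec {ι : Type*} (u : ι → ℤ) : Prop := ∀ i, u i = -1 ∨ u i = 0 ∨ u i = 1

/-- `cone V v` is `V_v = V ∩ ⨁ ε_i(v)·ℕ·e_i`: the elements of `V` whose `i`-th coordinate is a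
non-negative multiple of `sign (v i)` for every `i`. -/
def cone {ι : Type*} (V : Submodule ℤ (ι → ℤ)) (v : ι → ℤ) : Set (ι → ℤ) :=
  {x | x ∈ V ∧ ∀ i, ∃ k : ℕ, x i = (k : ℤ) * Int.sign (v i)}

/-- Property `𝔓`: for each `x ∈ V`, every element of `V_x` is a finite sum (with repetitions
allowed) of units lying in `V_x`. -/
def HasP {ι : Type*} (V : Submodule ℤ (ι → ℤ)) : Prop :=
  ∀ x ∈ V, ∀ y ∈ cone V x, ∃ l : Multiset (ι → ℤ),
    (∀ u ∈ l, IsUnitVec u ∧ u ∈ cone V x) ∧ l.sum = y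

open Submodule Finset

namespace Stmt3Aux

variable {n : ℕ} (V : Submodule ℤ (Fin n → ℤ))

/-- standard basis vector -/
def sb (j : Fin n) : Fin n → ℤ := Pi.single j 1

lemma sb_apply (j i : Fin n) : sb j i = if i = j then 1 else 0 := Pi.single_apply j 1 i

lemma sb_self (j : Fin n) : sb j j = 1 := by simp [sb]

lemma sb_ne {j i : Fin n} (h : i ≠ j) : sb j i = 0 := by simp [sb_apply, h]

/-- the module generated by V and the basis vectors in S -/
def WS (S : Finset (Fin n)) : Submodule ℤ (Fin n → ℤ) :=
  V ⊔ ⨆ j ∈ S, Submodule.span ℤ {sb j}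

lemma WS_empty : WS V ∅ = V := by simp [WS]

lemma WS_insert (j : Fin n) (S : Finset (Fin n)) :
    WS V (insert j S) = WS V S ⊔ Submodule.span ℤ {sb j} := by
  unfold WS
  rw [Finset.iSup_insert, sup_comm (Submodule.span ℤ {sb j}), ← sup_assoc]

lemma le_WS_insert (j : Fin n) (S : Finset (Fin n)) : WS V S ≤ WS V (insert j S) := by
  rw [WS_insert]; exact le_sup_left

lemma sb_mem_WS_insert (j : Fin n) (S : Finset (Fin n)) : sb j ∈ WS V (insert j S) := by
  rw [WS_insert]
  exact Submodule.mem_sup_right (Submodule.mem_span_singleton_self _)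

lemma self_mem_cone {v : Fin n → ℤ} (hv : v ∈ V) : v ∈ cone V v := by
  refine ⟨hv, fun i => ⟨(v i).natAbs, ?_⟩⟩
  rw [mul_comm, ← Int.abs_eq_natAbs]
  exact (Int.sign_mul_abs _).symm


lemma sign_unit (a : ℤ) : a.sign = -1 ∨ a.sign = 0 ∨ a.sign = 1 := by
  rcases Int.lt_trichotomy a 0 with h|h|h
  · left; exact Int.sign_eq_neg_one_of_neg h
  · right; left; simp [h]
  · right; right; exact Int.sign_eq_one_of_pos h

/-- The linear map zeroing out the `j`-th coordinate. -/
def zj (j : Fin n) : (Fin n → ℤ) →ₗ[ℤ] (Fin n → ℤ) :=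
  LinearMap.id - LinearMap.smulRight (LinearMap.proj j) (sb j)

lemma zj_apply (j : Fin n) (u : Fin n → ℤ) (i : Fin n) :
    zj j u i = u i - u j * sb j i := rfl

lemma zj_apply_self (j : Fin n) (u : Fin n → ℤ) : zj j u j = 0 := by
  rw [zj_apply, sb_self, mul_one, sub_self]

lemma zj_apply_ne (j : Fin n) (u : Fin n → ℤ) {i : Fin n} (h : i ≠ j) : zj j u i = u i := by
  rw [zj_apply, sb_ne h, mul_zero, sub_zero]

/-- Key decomposition lemma: every element of `WS V S` which is non-negative outside `T`
is a sum of unit vectors in `WS V S` which are non-negative outside `T`. -/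
lemma dec (hP : HasP V) (S : Finset (Fin n)) :
    ∀ (T : Set (Fin n)) (v : Fin n → ℤ), v ∈ WS V S → (∀ i, i ∉ T → 0 ≤ v i) →
    ∃ l : Multiset (Fin n → ℤ),
      (∀ u ∈ l, IsUnitVec u ∧ u ∈ WS V S ∧ ∀ i, i ∉ T → 0 ≤ u i) ∧ l.sum = v := by
  induction S using Finset.induction_on with
  | empty =>
    intro T v hv hpos
    rw [WS_empty] at hv
    obtain ⟨l, hl, hsum⟩ := hP v hv v (self_mem_cone V hv)
    refine ⟨l, fun u hu => ⟨(hl u hu).1, ?_, fun i hi => ?_⟩, hsum⟩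
    · rw [WS_empty]; exact (hl u hu).2.1
    · obtain ⟨k, hk⟩ := (hl u hu).2.2 i
      rw [hk]
      exact mul_nonneg (Int.natCast_nonneg k) (Int.sign_nonneg_iff.2 (hpos i hi))
  | @insert j S hj IH =>
    intro T v hv hpos
    rw [WS_insert] at hv
    obtain ⟨w, hw, z, hz, rfl⟩ := Submodule.mem_sup.1 hv
    obtain ⟨m, rfl⟩ := Submodule.mem_span_singleton.1 hz
    have hwi : ∀ i, i ∉ (T ∪ {j} : Set (Fin n)) → 0 ≤ w i := by
      intro i hi
      have hij : i ≠ j := fun h => hi (Set.mem_union_right _ (h ▸ rfl))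
      have hiT : i ∉ T := fun h => hi (Set.mem_union_left _ h)
      have := hpos i hiT
      simpa [Pi.add_apply, Pi.smul_apply, sb_ne hij] using this
    obtain ⟨l, hl, hsum⟩ := IH (T ∪ {j}) w hw hwi
    set vj : ℤ := w j + m with hvj
    have hvjv : (w + m • sb j) j = vj := by simp [sb_self, hvj]
    refine ⟨l.map (zj j) + Multiset.replicate vj.natAbs (vj.sign • sb j), ?_, ?_⟩
    · intro u hu
      rw [Multiset.mem_add] at hu
      rcases hu with hu | hu
      · obtain ⟨u', hu', rfl⟩ := Multiset.mem_map.1 hu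
        obtain ⟨hunit, hmem, hpos'⟩ := hl u' hu'
        refine ⟨?_, ?_, ?_⟩
        · intro i
          by_cases hij : i = j
          · subst hij; rw [zj_apply_self]; tauto
          · rw [zj_apply_ne _ _ hij]; exact hunit i
        · have h1 : u' ∈ WS V (insert j S) := le_WS_insert V j S hmem
          have h2 : sb j ∈ WS V (insert j S) := sb_mem_WS_insert V j S
          have : zj j u' = u' - u' j • sb j := by
            funext i; rw [zj_apply]; simp [smul_eq_mul]
          rw [this]
          exact Submodule.sub_mem _ h1 (Submodule.smul_mem _ _ h2)
        · intro i hi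
          by_cases hij : i = j
          · subst hij; rw [zj_apply_self]
          · rw [zj_apply_ne _ _ hij]
            exact hpos' i (by simp [hi, hij])
      · rw [Multiset.eq_of_mem_replicate hu]
        refine ⟨?_, ?_, ?_⟩
        · intro i
          by_cases hij : i = j
          · subst hij; simpa [sb_self] using sign_unit vj
          · simp [sb_ne hij]
        · exact Submodule.smul_mem _ _ (sb_mem_WS_insert V j S)
        · intro i hi
          by_cases hij : i = j
          · subst hij
            have : 0 ≤ vj := by rw [← hvjv]; exact hpos i hi
            simpa [sb_self] using Int.sign_nonneg_iff.2 this
          · simp [sb_ne hij]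
    · rw [Multiset.sum_add, Multiset.sum_replicate, ← map_multiset_sum, hsum,
        ← natCast_zsmul, smul_smul]
      have habs : (vj.natAbs : ℤ) * vj.sign = vj := by
        rw [mul_comm, ← Int.abs_eq_natAbs]; exact Int.sign_mul_abs vj
      rw [habs]
      funext i
      by_cases hij : i = j
      · subst hij
        simp [zj_apply_self, sb_self, hvj]
      · simp [zj_apply_ne _ _ hij, sb_ne hij]


lemma V_le_WS (S : Finset (Fin n)) : V ≤ WS V S := le_sup_left

lemma extend (hP : HasP V) (φ : V →+ ℤ)
    (hφ : ∀ x : V, (∀ i, 0 ≤ (x : Fin n → ℤ) i) → 0 ≤ φ x) (S : Finset (Fin n)) :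
    ∃ Φ : (Fin n → ℤ) →ₗ.[ℤ] ℤ, Φ.domain = WS V S ∧
      (∀ (x : Fin n → ℤ) (hx : x ∈ V) (hx' : x ∈ Φ.domain), Φ ⟨x, hx'⟩ = φ ⟨x, hx⟩) ∧
      (∀ (x : Fin n → ℤ) (hx' : x ∈ Φ.domain), (∀ i, 0 ≤ x i) → 0 ≤ Φ ⟨x, hx'⟩) := by
  classical
  induction S using Finset.induction_on with
  | empty =>
    refine ⟨⟨V, φ.toIntLinearMap⟩, (WS_empty V).symm, ?_, ?_⟩
    · intro x hx hx'; rfl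
    · intro x hx' h; exact hφ ⟨x, hx'⟩ h
  | @insert j S hj IH =>
    obtain ⟨Φ, hdom, hext, hpos⟩ := IH
    set f : (Fin n → ℤ) → ℤ := fun x => if h : x ∈ Φ.domain then Φ ⟨x, h⟩ else 0 with hf
    have f_eq : ∀ (x : Fin n → ℤ) (h : x ∈ Φ.domain), f x = Φ ⟨x, h⟩ := fun x h => dif_pos h
    have f_add : ∀ x y, x ∈ Φ.domain → y ∈ Φ.domain → f (x + y) = f x + f y := by
      intro x y hx hy
      rw [f_eq x hx, f_eq y hy, f_eq _ (add_mem hx hy)]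
      exact Φ.map_add ⟨x, hx⟩ ⟨y, hy⟩
    have f_neg : ∀ x, x ∈ Φ.domain → f (-x) = -f x := by
      intro x hx
      rw [f_eq _ hx, f_eq _ (neg_mem hx)]
      exact Φ.map_neg ⟨x, hx⟩
    have f_pos : ∀ x, x ∈ Φ.domain → (∀ i, 0 ≤ x i) → 0 ≤ f x := by
      intro x hx h
      rw [f_eq _ hx]; exact hpos x hx h
    have memWS : ∀ {x : Fin n → ℤ}, x ∈ WS V S → x ∈ Φ.domain := fun {x} h => hdom.symm ▸ h
    set U : Finset (Fin n → ℤ) := Fintype.piFinset (fun _ => ({-1, 0, 1} : Finset ℤ)) with hU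
    have memU : ∀ u : Fin n → ℤ, IsUnitVec u → u ∈ U := by
      intro u hu
      rw [hU, Fintype.mem_piFinset]
      intro i; rcases hu i with h | h | h <;> simp [h]
    set g0 : (Fin n → ℤ) → ℤ := fun u =>
      if IsUnitVec u ∧ u ∈ Φ.domain ∧ ∀ i, i ≠ j → 0 ≤ u i then -f u else 0 with hg0
    set t : ℤ := (insert 0 (U.image g0)).max' ⟨0, Finset.mem_insert_self _ _⟩ with htdef
    have ht0 : 0 ≤ t := Finset.le_max' _ 0 (Finset.mem_insert_self _ _)
    have htL : ∀ u, IsUnitVec u → u ∈ Φ.domain → (∀ i, i ≠ j → 0 ≤ u i) → -f u ≤ t := by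
      intro u h1 h2 h3
      have hgu : g0 u = -f u := if_pos ⟨h1, h2, h3⟩
      rw [← hgu]
      exact Finset.le_max' _ _ (Finset.mem_insert_of_mem (Finset.mem_image_of_mem _ (memU u h1)))
    have htU : ∀ u, IsUnitVec u → u ∈ Φ.domain → (∀ i, 0 ≤ u i) → u j = 1 → t ≤ f u := by
      intro u h1 h2 h3 h4
      apply Finset.max'_le
      intro y hy
      rcases Finset.mem_insert.1 hy with rfl | hy
      · exact f_pos u h2 h3
      · obtain ⟨u', _, rfl⟩ := Finset.mem_image.1 hy
        simp only [hg0]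
        split_ifs with hcond
        · obtain ⟨hc1, hc2, hc3⟩ := hcond
          have hc : ∀ i, 0 ≤ (u' + u) i := by
            intro i
            by_cases hij : i = j
            · rw [hij, Pi.add_apply, h4]; rcases hc1 j with h | h | h <;> omega
            · exact add_nonneg (hc3 i hij) (h3 i)
          have hsum : 0 ≤ f (u' + u) := f_pos _ (add_mem hc2 h2) hc
          rw [f_add _ _ hc2 h2] at hsum
          linarith
        · exact f_pos u h2 h3
    have key : ∀ x, x ∈ Φ.domain → (∀ i, i ≠ j → 0 ≤ x i) → t * x j ≤ f x := by
      intro x hx hxpos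
      obtain ⟨l, hl, hsum⟩ := dec V hP S {j} x (hdom ▸ hx)
        (fun i hi => hxpos i (by simpa using hi))
      have claim : ∀ l : Multiset (Fin n → ℤ),
          (∀ u ∈ l, IsUnitVec u ∧ u ∈ WS V S ∧ ∀ i, i ∉ ({j} : Set (Fin n)) → 0 ≤ u i) →
          l.sum ∈ Φ.domain ∧ t * l.sum j ≤ f l.sum := by
        intro l
        induction l using Multiset.induction_on with
        | empty =>
          intro _
          refine ⟨by simp, ?_⟩
          have : f (0 : Fin n → ℤ) = 0 := by rw [f_eq _ (zero_mem _)]; exact Φ.map_zero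
          simp [this]
        | @cons a s IH2 =>
          intro h
          obtain ⟨ha1, ha2, ha3⟩ := h a (Multiset.mem_cons_self a s)
          have ha2' : a ∈ Φ.domain := memWS ha2
          obtain ⟨hs1, hs2⟩ := IH2 (fun u hu => h u (Multiset.mem_cons_of_mem hu))
          rw [Multiset.sum_cons]
          refine ⟨add_mem ha2' hs1, ?_⟩
          rw [f_add _ _ ha2' hs1, Pi.add_apply, mul_add]
          have hua : t * a j ≤ f a := by
            rcases ha1 j with h' | h' | h'
            · rw [h']
              have := htL a ha1 ha2' (fun i hij => ha3 i (by simp [hij]))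
              linarith
            · rw [h', mul_zero]
              refine f_pos a ha2' (fun i => ?_)
              by_cases hij : i = j
              · rw [hij, h']
              · exact ha3 i (by simp [hij])
            · rw [h', mul_one]
              refine htU a ha1 ha2' (fun i => ?_) h'
              by_cases hij : i = j
              · rw [hij, h']; norm_num
              · exact ha3 i (by simp [hij])
          linarith
      obtain ⟨_, h2⟩ := claim l hl
      rwa [hsum] at h2
    have keyEq : ∀ x, x ∈ Φ.domain → (∀ i, i ≠ j → x i = 0) → f x = t * x j := by
      intro x hx h0
      have h1 := key x hx (fun i hij => le_of_eq (h0 i hij).symm)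
      have h2 := key (-x) (neg_mem hx) (fun i hij => by rw [Pi.neg_apply, h0 i hij, neg_zero])
      rw [f_neg x hx, Pi.neg_apply, mul_neg] at h2
      linarith
    set glin : (Fin n → ℤ) →ₗ[ℤ] ℤ := t • LinearMap.proj j with hglin
    set gp := glin.toPMap (Submodule.span ℤ {sb j}) with hgp
    have gp_apply : ∀ y : gp.domain, gp y = t * (y : Fin n → ℤ) j := by
      intro y
      show glin ↑y = _
      simp [hglin, smul_eq_mul]
    have hcompat : ∀ (x : Φ.domain) (y : gp.domain), (x : Fin n → ℤ) = y → Φ x = gp y := by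
      intro x y hxy
      obtain ⟨m, hm⟩ := Submodule.mem_span_singleton.1 y.2
      have hx0 : ∀ i, i ≠ j → (x : Fin n → ℤ) i = 0 := by
        intro i hij
        rw [hxy, ← hm]
        simp [sb_ne hij]
      rw [gp_apply y, ← hxy]
      rw [show Φ x = f ↑x from (f_eq ↑x x.2).symm]
      exact keyEq ↑x x.2 hx0
    refine ⟨Φ.sup gp hcompat, ?_, ?_, ?_⟩
    · show Φ.domain ⊔ gp.domain = _
      rw [WS_insert, hdom]
      rfl
    · intro x hx hx'
      have hxd : x ∈ Φ.domain := memWS (V_le_WS V S hx)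
      have := (Φ.left_le_sup gp hcompat).2 (x := ⟨x, hxd⟩) (y := ⟨x, hx'⟩) rfl
      rw [← this]
      exact hext x hx hxd
    · intro x hx' hxpos
      have hx'' : x ∈ Φ.domain ⊔ gp.domain := hx'
      obtain ⟨w, hw, z, hz, hwz⟩ := Submodule.mem_sup.1 hx''
      have happ := LinearPMap.sup_apply hcompat ⟨w, hw⟩ ⟨z, hz⟩ ⟨x, hx'⟩ hwz
      obtain ⟨m, hm⟩ := Submodule.mem_span_singleton.1 hz
      have hz0 : ∀ i, i ≠ j → z i = 0 := by
        intro i hij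
        rw [← hm]
        simp [sb_ne hij]
      have hwpos : ∀ i, i ≠ j → 0 ≤ w i := by
        intro i hij
        have hwi : w i = x i := by rw [← hwz, Pi.add_apply, hz0 i hij, add_zero]
        rw [hwi]; exact hxpos i
      have hkey := key w hw hwpos
      have hgpz : gp ⟨z, hz⟩ = t * z j := gp_apply ⟨z, hz⟩
      have hxj : x j = w j + z j := by rw [← hwz]; rfl
      have : 0 ≤ t * x j := mul_nonneg ht0 (hxpos j)
      rw [hgpz, show Φ ⟨w, hw⟩ = f w from (f_eq w hw).symm] at happ
      erw [happ]
      rw [hxj, mul_add] at this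
      linarith


lemma WS_univ : WS V Finset.univ = ⊤ := by
  rw [eq_top_iff]
  intro x _
  rw [pi_eq_sum_univ x]
  apply Submodule.sum_mem
  intro i _
  apply Submodule.smul_mem
  have hsb : (fun j => if i = j then (1 : ℤ) else 0) = sb i := by
    funext k; rw [sb_apply]; simp [eq_comm]
  rw [hsb]
  refine Submodule.mem_sup_right ?_
  exact Submodule.mem_iSup_of_mem i (Submodule.mem_iSup_of_mem (Finset.mem_univ i)
    (Submodule.mem_span_singleton_self _))

end Stmt3Aux

theorem stmt3' {n : ℕ} (V : Submodule ℤ (Fin n → ℤ)) (hP : HasP V)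
    (φ : V →+ ℤ) (hφ : ∀ x : V, (∀ i, 0 ≤ (x : Fin n → ℤ) i) → 0 ≤ φ x) :
    ∃ c : Fin n → ℕ, ∀ x : V, φ x = ∑ i, (c i : ℤ) * (x : Fin n → ℤ) i := by
  obtain ⟨Φ, hdom, hext, hpos⟩ := Stmt3Aux.extend V hP φ hφ Finset.univ
  have htop : ∀ y : Fin n → ℤ, y ∈ Φ.domain := by
    intro y; rw [hdom, Stmt3Aux.WS_univ]; trivial
  set Ψ : (Fin n → ℤ) →ₗ[ℤ] ℤ :=
    Φ.toFun.comp (LinearMap.codRestrict Φ.domain LinearMap.id htop) with hΨ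
  have hΨeq : ∀ (y : Fin n → ℤ) (h : y ∈ Φ.domain), Ψ y = Φ ⟨y, h⟩ := fun y h => rfl
  have hsbpos : ∀ i : Fin n, ∀ k, 0 ≤ Stmt3Aux.sb i k := by
    intro i k; rw [Stmt3Aux.sb_apply]; split_ifs <;> norm_num
  have hΨpos : ∀ i : Fin n, 0 ≤ Ψ (Stmt3Aux.sb i) := by
    intro i
    rw [hΨeq _ (htop _)]
    exact hpos _ (htop _) (hsbpos i)
  refine ⟨fun i => (Ψ (Stmt3Aux.sb i)).toNat, ?_⟩
  intro x
  have h1 : φ x = Ψ ↑x := by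
    rw [hΨeq _ (htop _)]
    exact (hext ↑x x.2 (htop _)).symm
  rw [h1, LinearMap.pi_apply_eq_sum_univ Ψ ↑x]
  apply Finset.sum_congr rfl
  intro i _
  rw [Int.toNat_of_nonneg (hΨpos i)]
  have hsb : (fun j => if i = j then (1 : ℤ) else 0) = Stmt3Aux.sb i := by
    funext k; rw [Stmt3Aux.sb_apply]; simp [eq_comm]
  rw [hsb, smul_eq_mul, mul_comm]


/-- For `v₀ = (1,…,1)`: if `V ⊆ ℤ^n` has property `𝔓` and `φ : V → ℤ` is non-negative on
`V ∩ ℕ^n`, then `φ` is given by non-negative integer coefficients `c_i`, i.e. it extends to a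
homomorphism `ℤ^n → ℤ` non-negative on `ℕ^n`. -/
theorem stmt3 {n : ℕ} (V : Submodule ℤ (Fin n → ℤ)) (hP : HasP V)
    (φ : V →+ ℤ) (hφ : ∀ x : V, (∀ i, 0 ≤ (x : Fin n → ℤ) i) → 0 ≤ φ x) :
    ∃ c : Fin n → ℕ, ∀ x : V, φ x = ∑ i, (c i : ℤ) * (x : Fin n → ℤ) i := by
  exact stmt3' V hP φ hφ
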